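/- For fixed t > 0, the function k ↦ h(t;k) is strictly increasing in k on any interval avoiding the singularities, where h(t;k) = √(t−k²)·cot(√(t−k²)) if t > k², h(t;k) = √(k²−t)·coth(√(k²−t)) if k² > t, and h(t;k) = 1 if t = k². (Strict monotonicity in k holds for k > 0 with t − k² ∉ {n²π² : n ∈ ℤ₊}.) -/

import Mathlib

open Real Set

/-- The piecewise function `h(t;k)`: `√(t−k²)·cot(√(t−k²))` if `t > k²`,
`√(k²−t)·coth(√(k²−t))` if `k² > t`, and `1` if `t = k²`. -/
noncomputable def hFun (t k : ℝ) : ℝ :=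
  if k ^ 2 < t then
    Real.sqrt (t - k ^ 2) * (Real.cos (Real.sqrt (t - k ^ 2)) / Real.sin (Real.sqrt (t - k ^ 2)))
  else if t < k ^ 2 then
    Real.sqrt (k ^ 2 - t) * (Real.cosh (Real.sqrt (k ^ 2 - t)) / Real.sinh (Real.sqrt (k ^ 2 - t)))
  else 1

/-- The function `g(x)` with `h(t;k) = g(t - k²)`. -/
noncomputable def gFun (x : ℝ) : ℝ :=
  if 0 < x then Real.sqrt x * (Real.cos (Real.sqrt x) / Real.sin (Real.sqrt x))
  else if x < 0 then
    Real.sqrt (-x) * (Real.cosh (Real.sqrt (-x)) / Real.sinh (Real.sqrt (-x)))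
  else 1

lemma hFun_eq_gFun (t k : ℝ) : hFun t k = gFun (t - k ^ 2) := by
  unfold hFun gFun
  rcases lt_trichotomy (k ^ 2) t with h | h | h
  · rw [if_pos h, if_pos (by linarith)]
  · rw [if_neg (by linarith), if_neg (by linarith), if_neg (by linarith),
      if_neg (by linarith)]
  · rw [if_neg (by linarith), if_pos h, if_neg (by linarith), if_pos (by linarith),
      show -(t - k ^ 2) = k ^ 2 - t by ring]

/-- `v ↦ v·coth v` is strictly increasing on `(0, ∞)`. -/
lemma cothAux_strictMono :
    StrictMonoOn (fun v : ℝ => v * (Real.cosh v / Real.sinh v)) (Set.Ioi 0) := by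
  apply strictMonoOn_of_deriv_pos (convex_Ioi 0)
  · apply ContinuousOn.mul continuousOn_id
    exact Real.continuous_cosh.continuousOn.div Real.continuous_sinh.continuousOn
      (fun v hv => ne_of_gt (Real.sinh_pos_iff.mpr hv))
  · intro v hv
    rw [interior_Ioi] at hv
    have hv0 : (0 : ℝ) < v := hv
    have hsp : 0 < Real.sinh v := Real.sinh_pos_iff.mpr hv0
    have hs : Real.sinh v ≠ 0 := ne_of_gt hsp
    have hd : HasDerivAt (fun v : ℝ => v * (Real.cosh v / Real.sinh v))
        ((Real.sinh v * Real.cosh v - v) / Real.sinh v ^ 2) v := by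
      have h1 : HasDerivAt (fun v : ℝ => v * Real.cosh v)
          (1 * Real.cosh v + v * Real.sinh v) v :=
        (hasDerivAt_id v).mul (Real.hasDerivAt_cosh v)
      have h2 := h1.div (Real.hasDerivAt_sinh v) hs
      have heq : ((1 * Real.cosh v + v * Real.sinh v) * Real.sinh v
            - v * Real.cosh v * Real.cosh v) / Real.sinh v ^ 2
          = (Real.sinh v * Real.cosh v - v) / Real.sinh v ^ 2 := by
        have hc : Real.cosh v ^ 2 = Real.sinh v ^ 2 + 1 := Real.cosh_sq v
        field_simp
        nlinarith [hc]
      rw [heq] at h2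
      have hf : (fun v : ℝ => v * (Real.cosh v / Real.sinh v)) = (fun v => v * Real.cosh v) / Real.sinh := by
        funext w; simp only [Pi.div_apply, mul_div_assoc]
      rw [hf]; exact h2
    rw [hd.deriv]
    apply div_pos _ (by positivity)
    have h2v : 2 * v < Real.sinh (2 * v) := Real.self_lt_sinh_iff.mpr (by linarith)
    rw [Real.sinh_two_mul] at h2v
    nlinarith
/-- `u ↦ u·cot u` is strictly decreasing on `(nπ, (n+1)π)`. -/
lemma cotAux_strictAnti (n : ℕ) :
    StrictAntiOn (fun u : ℝ => u * (Real.cos u / Real.sin u))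
      (Set.Ioo ((n : ℝ) * π) (((n : ℝ) + 1) * π)) := by
  have hsin : ∀ u ∈ Set.Ioo ((n : ℝ) * π) (((n : ℝ) + 1) * π), Real.sin u ≠ 0 := by
    intro u hu
    rw [Real.sin_ne_zero_iff]
    intro m hm
    rw [← hm] at hu
    have h1 : (n : ℝ) < m := by
      have := hu.1
      exact lt_of_mul_lt_mul_right this Real.pi_pos.le
    have h2 : (m : ℝ) < (n : ℝ) + 1 := by
      have := hu.2
      exact lt_of_mul_lt_mul_right this Real.pi_pos.le
    have h1' : (n : ℤ) < m := by exact_mod_cast h1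
    have h2' : m < (n : ℤ) + 1 := by exact_mod_cast h2
    omega
  apply strictAntiOn_of_deriv_neg (convex_Ioo _ _)
  · apply ContinuousOn.mul continuousOn_id
    exact Real.continuous_cos.continuousOn.div Real.continuous_sin.continuousOn hsin
  · intro u hu
    rw [interior_Ioo] at hu
    have hs : Real.sin u ≠ 0 := hsin u hu
    have hu0 : 0 < u := by
      have : (0 : ℝ) ≤ (n : ℝ) * π := by positivity
      linarith [hu.1]
    have hd : HasDerivAt (fun u : ℝ => u * (Real.cos u / Real.sin u))
        ((Real.sin u * Real.cos u - u) / Real.sin u ^ 2) u := by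
      have h1 : HasDerivAt (fun u : ℝ => u * Real.cos u)
          (1 * Real.cos u + u * -Real.sin u) u :=
        (hasDerivAt_id u).mul (Real.hasDerivAt_cos u)
      have h2 := h1.div (Real.hasDerivAt_sin u) hs
      have heq : ((1 * Real.cos u + u * -Real.sin u) * Real.sin u
            - u * Real.cos u * Real.cos u) / Real.sin u ^ 2
          = (Real.sin u * Real.cos u - u) / Real.sin u ^ 2 := by
        have hc : Real.sin u ^ 2 + Real.cos u ^ 2 = 1 := Real.sin_sq_add_cos_sq u
        field_simp
        nlinarith [hc]
      rw [heq] at h2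
      have hf : (fun u : ℝ => u * (Real.cos u / Real.sin u)) = (fun u => u * Real.cos u) / Real.sin := by
        funext w; simp only [Pi.div_apply, mul_div_assoc]
      rw [hf]; exact h2
    rw [hd.deriv]
    apply div_neg_of_neg_of_pos _ (by positivity)
    have h2u : Real.sin (2 * u) < 2 * u := Real.sin_lt (by linarith)
    rw [Real.sin_two_mul] at h2u
    nlinarith

/-- `1 < v·coth v` for `v > 0`. -/
lemma one_lt_cothAux {v : ℝ} (hv : 0 < v) : 1 < v * (Real.cosh v / Real.sinh v) := by
  have hsp : 0 < Real.sinh v := Real.sinh_pos_iff.mpr hv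
  rw [mul_div_assoc' , lt_div_iff₀ hsp, one_mul]
  -- sinh v < v * cosh v
  have key : StrictMonoOn (fun v : ℝ => v * Real.cosh v - Real.sinh v) (Set.Ici 0) := by
    apply strictMonoOn_of_deriv_pos (convex_Ici 0)
    · exact ((continuousOn_id.mul Real.continuous_cosh.continuousOn).sub
        Real.continuous_sinh.continuousOn)
    · intro w hw
      rw [interior_Ici] at hw
      have hd : HasDerivAt (fun v : ℝ => v * Real.cosh v - Real.sinh v)
          (1 * Real.cosh w + w * Real.sinh w - Real.cosh w) w :=
        ((hasDerivAt_id w).mul (Real.hasDerivAt_cosh w)).sub (Real.hasDerivAt_sinh w)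
      rw [hd.deriv]
      have : 0 < w * Real.sinh w := mul_pos hw (Real.sinh_pos_iff.mpr hw)
      linarith
  have := key (Set.self_mem_Ici) (Set.mem_Ici.mpr hv.le) hv
  simp only [Real.cosh_zero, Real.sinh_zero, mul_zero, zero_mul, sub_zero] at this
  linarith

/-- `u·cot u < 1` for `0 < u < π`. -/
lemma cotAux_lt_one {u : ℝ} (h0 : 0 < u) (hπ : u < π) : u * (Real.cos u / Real.sin u) < 1 := by
  have hsp : 0 < Real.sin u := Real.sin_pos_of_pos_of_lt_pi h0 hπ
  rw [mul_div_assoc', div_lt_one hsp]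
  -- u * cos u < sin u
  have key : StrictMonoOn (fun u : ℝ => Real.sin u - u * Real.cos u) (Set.Icc 0 π) := by
    apply strictMonoOn_of_deriv_pos (convex_Icc 0 π)
    · exact Real.continuous_sin.continuousOn.sub
        (continuousOn_id.mul Real.continuous_cos.continuousOn)
    · intro w hw
      rw [interior_Icc] at hw
      have hd : HasDerivAt (fun u : ℝ => Real.sin u - u * Real.cos u)
          (Real.cos w - (1 * Real.cos w + w * -Real.sin w)) w :=
        (Real.hasDerivAt_sin w).sub ((hasDerivAt_id w).mul (Real.hasDerivAt_cos w))
      rw [hd.deriv]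
      have : 0 < w * Real.sin w := mul_pos hw.1 (Real.sin_pos_of_pos_of_lt_pi hw.1 hw.2)
      linarith
  have := key (Set.left_mem_Icc.mpr Real.pi_pos.le)
    (Set.mem_Icc.mpr ⟨h0.le, hπ.le⟩) h0
  simp only [Real.sin_zero, Real.cos_zero, mul_one, zero_mul, sub_zero, mul_zero] at this
  linarith

/-- `gFun` is strictly decreasing on `(-∞, π²)`. -/
lemma gFun_lt {x y : ℝ} (hxy : x < y) (hy : y < π ^ 2) : gFun y < gFun x := by
  have hπ : 0 < π := Real.pi_pos
  rcases lt_trichotomy y 0 with hy0 | hy0 | hy0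
  · -- both negative : coth branch
    have hx0 : x < 0 := lt_trans hxy hy0
    rw [gFun, if_neg (by linarith), if_pos hy0, gFun, if_neg (by linarith), if_pos hx0]
    exact cothAux_strictMono (Set.mem_Ioi.mpr (Real.sqrt_pos.mpr (by linarith)))
      (Set.mem_Ioi.mpr (Real.sqrt_pos.mpr (by linarith)))
      (Real.sqrt_lt_sqrt (by linarith) (by linarith))
  · -- y = 0
    subst hy0
    rw [gFun, if_neg (lt_irrefl 0), if_neg (lt_irrefl 0), gFun, if_neg (by linarith),
      if_pos hxy]
    exact one_lt_cothAux (Real.sqrt_pos.mpr (by linarith))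
  · -- y > 0
    have hylt : Real.sqrt y < π := by
      rw [show π = Real.sqrt (π ^ 2) by rw [Real.sqrt_sq hπ.le]]
      exact Real.sqrt_lt_sqrt hy0.le hy
    have hygt : 0 < Real.sqrt y := Real.sqrt_pos.mpr hy0
    rcases lt_trichotomy x 0 with hx0 | hx0 | hx0
    · rw [gFun, if_pos hy0, gFun, if_neg (by linarith), if_pos hx0]
      calc Real.sqrt y * (Real.cos (Real.sqrt y) / Real.sin (Real.sqrt y)) < 1 :=
            cotAux_lt_one hygt hylt
        _ < _ := one_lt_cothAux (Real.sqrt_pos.mpr (by linarith))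
    · subst hx0
      rw [gFun, if_pos hy0, gFun, if_neg (lt_irrefl 0), if_neg (lt_irrefl 0)]
      exact cotAux_lt_one hygt hylt
    · rw [gFun, if_pos hy0, gFun, if_pos hx0]
      have h0 := cotAux_strictAnti 0
      simp only [Nat.cast_zero, zero_mul, zero_add, one_mul] at h0
      exact h0 ⟨Real.sqrt_pos.mpr hx0, lt_trans (Real.sqrt_lt_sqrt hx0.le hxy) hylt⟩
        ⟨hygt, hylt⟩ (Real.sqrt_lt_sqrt hx0.le hxy)

/-- For fixed `t > 0`, `k ↦ h(t;k)` is strictly increasing on any interval of positive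
numbers avoiding the singularities `t − k² = n²π²`, `n ∈ ℤ₊`. -/
theorem hFun_strictMono_in_k (t : ℝ) (ht : 0 < t) (s : Set ℝ) (hs : s.OrdConnected)
    (hpos : s ⊆ Set.Ioi 0)
    (hsing : ∀ k ∈ s, ∀ n : ℕ, 0 < n → t - k ^ 2 ≠ (n : ℝ) ^ 2 * Real.pi ^ 2) :
    StrictMonoOn (fun k => hFun t k) s := by
  have hπ : 0 < π := Real.pi_pos
  intro a ha b hb hab
  simp only [hFun_eq_gFun]
  have ha0 : 0 < a := hpos ha
  have hb0 : 0 < b := hpos hb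
  set xa := t - a ^ 2 with hxa
  set xb := t - b ^ 2 with hxb
  have hx : xb < xa := by nlinarith
  -- no poles in [xb, xa]
  have hpole : ∀ x, xb ≤ x → x ≤ xa → ∀ n : ℕ, 0 < n → x ≠ (n : ℝ) ^ 2 * π ^ 2 := by
    intro x h1 h2 n hn
    have htx : a ^ 2 ≤ t - x := by linarith [hxa ▸ h2]
    have htx' : t - x ≤ b ^ 2 := by linarith [hxb ▸ h1]
    have htxpos : 0 < t - x := lt_of_lt_of_le (by positivity) htx
    have hk1 : a ≤ Real.sqrt (t - x) := by
      rw [show a = Real.sqrt (a ^ 2) by rw [Real.sqrt_sq ha0.le]]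
      exact Real.sqrt_le_sqrt htx
    have hk2 : Real.sqrt (t - x) ≤ b := by
      rw [show b = Real.sqrt (b ^ 2) by rw [Real.sqrt_sq hb0.le]]
      exact Real.sqrt_le_sqrt htx'
    have hk : Real.sqrt (t - x) ∈ s := hs.out ha hb ⟨hk1, hk2⟩
    have := hsing _ hk n hn
    rwa [Real.sq_sqrt htxpos.le, sub_sub_cancel] at this
  -- goal : gFun xa < gFun xb
  by_cases hcase : xa < π ^ 2
  · exact gFun_lt hx hcase
  · push_neg at hcase
    have hπ2 : π ^ 2 < xb := by
      rcases lt_or_ge (π ^ 2) xb with h | h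
      · exact h
      · exfalso
        exact hpole (π ^ 2) h hcase 1 one_pos (by norm_num)
    have hxbpos : 0 < xb := lt_trans (by positivity) hπ2
    have hxapos : 0 < xa := lt_trans hxbpos hx
    set u1 := Real.sqrt xb with hu1
    set u2 := Real.sqrt xa with hu2
    have hu1pos : 0 < u1 := Real.sqrt_pos.mpr hxbpos
    have hu12 : u1 < u2 := Real.sqrt_lt_sqrt hxbpos.le hx
    have hu1gt : π < u1 := by
      rw [hu1, show π = Real.sqrt (π ^ 2) by rw [Real.sqrt_sq hπ.le]]
      exact Real.sqrt_lt_sqrt (by positivity) hπ2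
    have hu1sq : u1 ^ 2 = xb := Real.sq_sqrt hxbpos.le
    have hu2sq : u2 ^ 2 = xa := Real.sq_sqrt hxapos.le
    set n : ℕ := ⌊u1 / π⌋₊ with hn
    have hn1 : 1 ≤ n := by
      rw [hn]
      have : (1 : ℝ) ≤ u1 / π := (one_le_div hπ).mpr hu1gt.le
      exact Nat.le_floor (by exact_mod_cast this)
    have hnle : (n : ℝ) * π ≤ u1 := by
      have := Nat.floor_le (by positivity : (0:ℝ) ≤ u1 / π)
      rw [← hn] at this
      calc (n : ℝ) * π ≤ (u1 / π) * π := by nlinarith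
        _ = u1 := by field_simp
    have hnlt : u1 < ((n : ℝ) + 1) * π := by
      have := Nat.lt_floor_add_one (u1 / π)
      rw [← hn] at this
      calc u1 = (u1 / π) * π := by field_simp
        _ < ((n : ℝ) + 1) * π := by nlinarith
    have hnlt' : (n : ℝ) * π < u1 := by
      rcases lt_or_eq_of_le hnle with h | h
      · exact h
      · exfalso
        exact hpole xb le_rfl hx.le n hn1 (by rw [← hu1sq, ← h]; ring)
    have hu2lt : u2 < ((n : ℝ) + 1) * π := by
      by_contra hcon
      push_neg at hcon
      have hfp : ((n + 1 : ℕ) : ℝ) ^ 2 * π ^ 2 = (((n : ℝ) + 1) * π) ^ 2 := by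
        push_cast; ring
      exact hpole ((((n : ℝ) + 1) * π) ^ 2) (by rw [← hu1sq]; nlinarith)
        (by rw [← hu2sq]; nlinarith) (n + 1) (by omega) hfp.symm
    have := cotAux_strictAnti n ⟨hnlt', lt_trans hu12 hu2lt⟩
      ⟨lt_trans hnlt' hu12, hu2lt⟩ hu12
    rw [gFun, if_pos hxapos, gFun, if_pos hxbpos]
    exact this
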